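/- For the simple random walk on the cycle graph with $n+1$ nodes ($n \geq 2$) started at any node, the expected cover time equals $\frac{n(n+1)}{2}$. -/

import Mathlib

open Finset
open scoped Classical

/-- Probability that a Markov chain with transition matrix `P` started at `s`
produces the trajectory prefix `w 0, w 1, ..., w k`. -/
noncomputable def prefixProb {V : Type*} (P : V → V → ℝ) (s : V) {k : ℕ}
    (w : Fin (k + 1) → V) : ℝ :=
  (if w 0 = s then (1 : ℝ) else 0) * ∏ t : Fin k, P (w t.castSucc) (w t.succ)

/-- `P(T_C > k)`: the probability that the first `k+1` states of the chain do not
visit every node. -/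
noncomputable def coverSurvival {V : Type*} [Fintype V] (P : V → V → ℝ) (s : V) (k : ℕ) : ℝ :=
  ∑ w : Fin (k + 1) → V, if Function.Surjective w then 0 else prefixProb P s w

/-- Expected cover time `E[T_C] = ∑_{k ≥ 0} P(T_C > k)`. -/
noncomputable def expCoverTime {V : Type*} [Fintype V] (P : V → V → ℝ) (s : V) : ℝ :=
  ∑' k : ℕ, coverSurvival P s k

/-- Transition matrix of the simple random walk on the cycle with `n + 1` nodes:
move to each of the two neighbours with probability `1/2`. -/
noncomputable def cycleRW (n : ℕ) (i j : ZMod (n + 1)) : ℝ :=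
  if j = i + 1 ∨ j = i - 1 then 1 / 2 else 0

set_option linter.unusedSectionVars false
namespace CycleCover


def Rt (p : ℕ × ℕ) : ℕ × ℕ := (p.1 + 1, max (p.2 - 1) 1)
def Lt (p : ℕ × ℕ) : ℕ × ℕ := (max (p.1 - 1) 1, p.2 + 1)

noncomputable def G (N : ℕ) : ℕ → ℕ × ℕ → ℝ
  | 0, p => if N + 1 ≤ p.1 + p.2 then 0 else 1
  | (k+1), p => if N + 1 ≤ p.1 + p.2 then 0 else (G N k (Rt p) + G N k (Lt p)) / 2

noncomputable def Ff (N : ℕ) (p : ℕ × ℕ) : ℝ :=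
  if N + 1 ≤ p.1 + p.2 then 0
  else (p.1 : ℝ) * p.2 + ((N : ℝ) * ((N : ℝ) - 1) - ((p.1 : ℝ) + p.2) * ((p.1 : ℝ) + p.2 - 1)) / 2

lemma G_zero (N : ℕ) (p : ℕ × ℕ) :
    G N 0 p = if N + 1 ≤ p.1 + p.2 then 0 else 1 := rfl

lemma G_succ (N k : ℕ) (p : ℕ × ℕ) :
    G N (k+1) p = if N + 1 ≤ p.1 + p.2 then 0 else (G N k (Rt p) + G N k (Lt p)) / 2 := rfl

lemma G_absorbed (N k : ℕ) (p : ℕ × ℕ) (h : N + 1 ≤ p.1 + p.2) : G N k p = 0 := by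
  cases k <;> simp [G, h]

lemma G_nonneg (N : ℕ) : ∀ k p, 0 ≤ G N k p := by
  intro k
  induction k with
  | zero =>
    intro p; rw [G_zero]; split
    · rfl
    · norm_num
  | succ k ih =>
    intro p; rw [G_succ]; split
    · rfl
    · have h1 := ih (Rt p); have h2 := ih (Lt p); linarith

lemma G_le_one (N : ℕ) : ∀ k p, G N k p ≤ 1 := by
  intro k
  induction k with
  | zero =>
    intro p; rw [G_zero]; split <;> norm_num
  | succ k ih =>
    intro p; rw [G_succ]; split
    · norm_num
    · have h1 := ih (Rt p); have h2 := ih (Lt p); linarith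

lemma G_succ_le (N : ℕ) : ∀ k p, G N (k+1) p ≤ G N k p := by
  intro k
  induction k with
  | zero =>
    intro p
    rw [G_zero, G_succ]; split
    · rfl
    · have h1 := G_le_one N 0 (Rt p); have h2 := G_le_one N 0 (Lt p); linarith
  | succ k ih =>
    intro p
    rw [G_succ N (k+1) p, G_succ N k p]
    by_cases h : N + 1 ≤ p.1 + p.2
    · simp [h]
    · simp only [h, if_false]
      have h1 := ih (Rt p); have h2 := ih (Lt p); linarith

lemma G_anti (N : ℕ) (p : ℕ × ℕ) : Antitone (fun k => G N k p) :=
  antitone_nat_of_succ_le (fun k => G_succ_le N k p)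

lemma G_le_of_le (N : ℕ) {k k' : ℕ} (h : k ≤ k') (p : ℕ × ℕ) : G N k' p ≤ G N k p :=
  G_anti N p h

lemma Ff_val (N a b : ℕ) (h : a + b ≤ N) :
    Ff N (a, b) = (a : ℝ) * b + ((N : ℝ) * ((N : ℝ) - 1) - ((a : ℝ) + b) * ((a : ℝ) + b - 1)) / 2 := by
  have e : Ff N (a, b) = if N + 1 ≤ a + b then (0:ℝ)
      else (a : ℝ) * b + ((N : ℝ) * ((N : ℝ) - 1) - ((a : ℝ) + b) * ((a : ℝ) + b - 1)) / 2 := rfl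
  rw [e, if_neg (by omega)]

lemma Ff_absorbed (N a b : ℕ) (h : N + 1 ≤ a + b) : Ff N (a, b) = 0 := by
  have e : Ff N (a, b) = if N + 1 ≤ a + b then (0:ℝ)
      else (a : ℝ) * b + ((N : ℝ) * ((N : ℝ) - 1) - ((a : ℝ) + b) * ((a : ℝ) + b - 1)) / 2 := rfl
  rw [e, if_pos (by omega)]

lemma Ff_abs_le (N : ℕ) (p : ℕ × ℕ) (h1 : 1 ≤ p.1) (h2 : 1 ≤ p.2) :
    |Ff N p| ≤ 2 * (N : ℝ)^2 := by
  obtain ⟨a, b⟩ := p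
  simp only at h1 h2
  rcases Nat.lt_or_ge (a + b) (N + 1) with h | h
  · have hab : a + b ≤ N := by omega
    rw [Ff_val N a b hab]
    have hA : (1:ℝ) ≤ (a:ℝ) := by exact_mod_cast h1
    have hB : (1:ℝ) ≤ (b:ℝ) := by exact_mod_cast h2
    have hS : (a:ℝ) + b ≤ N := by exact_mod_cast hab
    rw [abs_le]
    constructor <;> nlinarith [sq_nonneg ((a:ℝ)+b), sq_nonneg ((a:ℝ)-b), sq_nonneg ((N:ℝ))]
  · rw [Ff_absorbed N a b (by omega)]
    simp

lemma Ff_step (N a b : ℕ) (hN : 3 ≤ N) (ha : 1 ≤ a) (hb : 1 ≤ b) (hab : a + b ≤ N) :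
    Ff N (a, b) = 1 + (Ff N (Rt (a, b)) + Ff N (Lt (a, b))) / 2 := by
  rcases Nat.lt_or_ge b 2 with hb1 | hb2
  · have hb' : b = 1 := by omega
    subst hb'
    have hR : Rt (a, 1) = (a + 1, 1) := by simp [Rt]
    rcases Nat.lt_or_ge a 2 with ha1 | ha2
    · have ha' : a = 1 := by omega
      subst ha'
      have hL : Lt (1, 1) = (1, 2) := by simp [Lt]
      rw [hR, hL, Ff_val N 1 1 (by omega), Ff_val N 2 1 (by omega), Ff_val N 1 2 (by omega)]
      push_cast
      ring
    · have hL : Lt (a, 1) = (a - 1, 2) := by simp [Lt]; omega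
      rw [hR, hL]
      rcases Nat.lt_or_ge (a + 1) N with hc | hc
      · rw [Ff_val N a 1 (by omega), Ff_val N (a+1) 1 (by omega), Ff_val N (a-1) 2 (by omega)]
        push_cast [Nat.cast_sub (by omega : 1 ≤ a)]
        ring
      · have hc' : a + 1 = N := by omega
        subst hc'
        rw [Ff_val (a+1) a 1 (by omega), Ff_absorbed (a+1) (a+1) 1 (by omega),
          Ff_val (a+1) (a-1) 2 (by omega)]
        push_cast [Nat.cast_sub (by omega : 1 ≤ a)]
        ring
  · have hR : Rt (a, b) = (a + 1, b - 1) := by simp [Rt]; omega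
    rcases Nat.lt_or_ge a 2 with ha1 | ha2
    · have ha' : a = 1 := by omega
      subst ha'
      have hL : Lt (1, b) = (1, b + 1) := by simp [Lt]
      rw [hR, hL]
      rcases Nat.lt_or_ge (b + 1) N with hc | hc
      · rw [Ff_val N 1 b (by omega), Ff_val N 2 (b-1) (by omega), Ff_val N 1 (b+1) (by omega)]
        push_cast [Nat.cast_sub (by omega : 1 ≤ b)]
        ring
      · have hc' : b + 1 = N := by omega
        subst hc'
        rw [Ff_val (b+1) 1 b (by omega), Ff_val (b+1) 2 (b-1) (by omega),
          Ff_absorbed (b+1) 1 (b+1) (by omega)]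
        push_cast [Nat.cast_sub (by omega : 1 ≤ b)]
        ring
    · have hL : Lt (a, b) = (a - 1, b + 1) := by simp [Lt]; omega
      rw [hR, hL, Ff_val N a b (by omega), Ff_val N (a+1) (b-1) (by omega),
        Ff_val N (a-1) (b+1) (by omega)]
      push_cast [Nat.cast_sub (by omega : 1 ≤ a), Nat.cast_sub (by omega : 1 ≤ b)]
      ring


lemma Rt_iter_fst (m : ℕ) (p : ℕ × ℕ) : (Rt^[m] p).1 = p.1 + m := by
  induction m generalizing p with
  | zero => simp
  | succ m ih =>
    rw [Function.iterate_succ_apply, ih]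
    simp [Rt]; omega

/-- key decay step: if G at time k is uniformly ≤ c on valid states, then
G at time k+N is ≤ (1 - (1/2)^N) * c. -/
lemma G_decay (N k : ℕ) (c : ℝ) (hc : 0 ≤ c)
    (H : ∀ q : ℕ × ℕ, 1 ≤ q.1 → 1 ≤ q.2 → G N k q ≤ c) :
    ∀ p : ℕ × ℕ, 1 ≤ p.1 → 1 ≤ p.2 → G N (k + N) p ≤ (1 - (1/2)^N) * c := by
  have main : ∀ m : ℕ, ∀ p : ℕ × ℕ, 1 ≤ p.1 → 1 ≤ p.2 →
      G N (k + m) p ≤ c * ((1/2)^m * (if N + 1 ≤ (Rt^[m] p).1 + (Rt^[m] p).2 then 0 else 1)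
        + (1 - (1/2)^m)) := by
    intro m
    induction m with
    | zero =>
      intro p h1 h2
      show G N k p ≤ c * ((1/2)^0 * (if N + 1 ≤ p.1 + p.2 then 0 else 1) + (1 - (1/2)^0))
      simp only [Function.iterate_zero, id_eq, pow_zero, Nat.add_zero]
      split_ifs
      · rw [G_absorbed N k p (by assumption)]
        positivity
      · simpa using H p h1 h2
    | succ m ih =>
      intro p h1 h2
      rw [show k + (m+1) = (k + m) + 1 by ring, G_succ]
      have hRv1 : 1 ≤ (Rt p).1 := Nat.le_add_left 1 p.1
      have hRv2 : 1 ≤ (Rt p).2 := Nat.le_max_right _ 1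
      have hLv1 : 1 ≤ (Lt p).1 := Nat.le_max_right _ 1
      have hLv2 : 1 ≤ (Lt p).2 := Nat.le_add_left 1 p.2
      split
      · have hx : (0:ℝ) ≤ (if N + 1 ≤ (Rt^[m+1] p).1 + (Rt^[m+1] p).2 then (0:ℝ) else 1) := by
          split <;> norm_num
        have hy : ((1:ℝ)/2)^(m+1) ≤ 1 := pow_le_one₀ (by norm_num) (by norm_num)
        exact mul_nonneg hc (add_nonneg (mul_nonneg (by positivity) hx) (by linarith))
      · have hR := ih (Rt p) hRv1 hRv2
        have hL : G N (k + m) (Lt p) ≤ c := by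
          calc G N (k + m) (Lt p) ≤ G N k (Lt p) := G_le_of_le N (Nat.le_add_right k m) _
          _ ≤ c := H (Lt p) hLv1 hLv2
        rw [← Function.iterate_succ_apply] at hR
        set χ : ℝ := (if N + 1 ≤ (Rt^[m+1] p).1 + (Rt^[m+1] p).2 then (0:ℝ) else 1) with hχ
        have hχ01 : 0 ≤ χ ∧ χ ≤ 1 := by rw [hχ]; split <;> norm_num
        have hp : (0:ℝ) < (1/2)^m := by positivity
        have : G N (k + m) (Rt p) + G N (k + m) (Lt p)
            ≤ c * ((1/2)^m * χ + (1 - (1/2)^m)) + c := by linarith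
        calc (G N (k+m) (Rt p) + G N (k+m) (Lt p)) / 2
            ≤ (c * ((1/2)^m * χ + (1 - (1/2)^m)) + c) / 2 := by linarith
          _ = c * ((1/2)^(m+1) * χ + (1 - (1/2)^(m+1))) := by ring
  intro p h1 h2
  have h := main N p h1 h2
  rw [if_pos] at h
  · simpa [mul_comm] using h
  · have := Rt_iter_fst N p
    omega

lemma G_pow_bound (N : ℕ) : ∀ j : ℕ, ∀ p : ℕ × ℕ, 1 ≤ p.1 → 1 ≤ p.2 →
    G N (j * N) p ≤ (1 - (1/2)^N)^j := by
  have hr0 : (0:ℝ) ≤ 1 - (1/2)^N := by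
    have : ((1:ℝ)/2)^N ≤ 1 := by
      apply pow_le_one₀ <;> norm_num
    linarith
  intro j
  induction j with
  | zero => intro p h1 h2; simpa using G_le_one N 0 p
  | succ j ih =>
    intro p h1 h2
    have := G_decay N (j * N) ((1 - (1/2)^N)^j) (by positivity) ih p h1 h2
    calc G N ((j+1) * N) p = G N (j * N + N) p := by ring_nf
      _ ≤ (1 - (1/2)^N) * (1 - (1/2)^N)^j := this
      _ = (1 - (1/2)^N)^(j+1) := by ring

lemma G_bound (N : ℕ) (K : ℕ) (p : ℕ × ℕ) (h1 : 1 ≤ p.1) (h2 : 1 ≤ p.2) :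
    G N K p ≤ (1 - (1/2)^N)^(K / N) := by
  calc G N K p ≤ G N ((K / N) * N) p := G_le_of_le N (Nat.div_mul_le_self K N) p
    _ ≤ (1 - (1/2)^N)^(K / N) := G_pow_bound N (K / N) p h1 h2


lemma err_bound (N : ℕ) (hN : 3 ≤ N) : ∀ K : ℕ, ∀ a b : ℕ, 1 ≤ a → 1 ≤ b → a + b ≤ N + 1 →
    |Ff N (a, b) - ∑ k ∈ Finset.range K, G N k (a, b)| ≤ 2 * (N : ℝ)^2 * G N K (a, b) := by
  intro K
  induction K with
  | zero =>
    intro a b ha hb hab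
    rcases Nat.lt_or_ge (a + b) (N + 1) with h | h
    · rw [Finset.range_zero, Finset.sum_empty, G_zero, if_neg (by show ¬ N+1 ≤ a+b; omega),
        sub_zero, mul_one]
      exact Ff_abs_le N (a, b) ha hb
    · rw [Finset.range_zero, Finset.sum_empty, G_zero, if_pos (by show N+1 ≤ a+b; omega),
        sub_zero, Ff_absorbed N a b (by omega)]
      simp
  | succ K ih =>
    intro a b ha hb hab
    rcases Nat.lt_or_ge (a + b) (N + 1) with h | h
    · -- live state : a + b ≤ N
      have hab' : a + b ≤ N := by omega
      have hRa : 1 ≤ a + 1 := by omega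
      have hRb : 1 ≤ max (b - 1) 1 := Nat.le_max_right _ 1
      have hRs : (a + 1) + max (b - 1) 1 ≤ N + 1 := by omega
      have hLa : 1 ≤ max (a - 1) 1 := Nat.le_max_right _ 1
      have hLb : 1 ≤ b + 1 := by omega
      have hLs : max (a - 1) 1 + (b + 1) ≤ N + 1 := by omega
      have hR := ih (a + 1) (max (b - 1) 1) hRa hRb hRs
      have hL := ih (max (a - 1) 1) (b + 1) hLa hLb hLs
      have hRt : Rt (a, b) = (a + 1, max (b - 1) 1) := rfl
      have hLt : Lt (a, b) = (max (a - 1) 1, b + 1) := rfl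
      have hsum : ∑ k ∈ Finset.range (K + 1), G N k (a, b)
          = 1 + ((∑ k ∈ Finset.range K, G N k (a + 1, max (b - 1) 1))
               + (∑ k ∈ Finset.range K, G N k (max (a - 1) 1, b + 1))) / 2 := by
        rw [Finset.sum_range_succ' (fun k => G N k (a, b)) K]
        have e1 : ∀ k, G N (k + 1) (a, b)
            = (G N k (a + 1, max (b - 1) 1) + G N k (max (a - 1) 1, b + 1)) / 2 := by
          intro k
          rw [G_succ, if_neg (by show ¬ N+1 ≤ a+b; omega), hRt, hLt]
        rw [Finset.sum_congr rfl (fun k _ => e1 k), G_zero,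
          if_neg (by show ¬ N+1 ≤ a+b; omega)]
        rw [← Finset.sum_div, Finset.sum_add_distrib]
        ring
      have hFf : Ff N (a, b) = 1 + (Ff N (a + 1, max (b - 1) 1) + Ff N (max (a - 1) 1, b + 1)) / 2 := by
        have := Ff_step N a b hN ha hb hab'
        rwa [hRt, hLt] at this
      have hGs : G N (K + 1) (a, b)
          = (G N K (a + 1, max (b - 1) 1) + G N K (max (a - 1) 1, b + 1)) / 2 := by
        rw [G_succ, if_neg (by show ¬ N+1 ≤ a+b; omega), hRt, hLt]
      rw [hsum, hFf, hGs]
      have key : (1:ℝ) + (Ff N (a + 1, max (b - 1) 1) + Ff N (max (a - 1) 1, b + 1)) / 2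
          - (1 + ((∑ k ∈ Finset.range K, G N k (a + 1, max (b - 1) 1))
               + (∑ k ∈ Finset.range K, G N k (max (a - 1) 1, b + 1))) / 2)
          = ((Ff N (a + 1, max (b - 1) 1) - ∑ k ∈ Finset.range K, G N k (a + 1, max (b - 1) 1))
           + (Ff N (max (a - 1) 1, b + 1) - ∑ k ∈ Finset.range K, G N k (max (a - 1) 1, b + 1))) / 2 := by
        ring
      rw [key]
      calc |(_ + _) / 2| ≤ (|Ff N (a + 1, max (b - 1) 1) - ∑ k ∈ Finset.range K, G N k (a + 1, max (b - 1) 1)|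
            + |Ff N (max (a - 1) 1, b + 1) - ∑ k ∈ Finset.range K, G N k (max (a - 1) 1, b + 1)|) / 2 := by
            rw [abs_div]
            simp only [abs_two]
            gcongr
            exact abs_add_le _ _
        _ ≤ (2 * (N : ℝ)^2 * G N K (a + 1, max (b - 1) 1)
            + 2 * (N : ℝ)^2 * G N K (max (a - 1) 1, b + 1)) / 2 := by gcongr
        _ = 2 * (N : ℝ)^2 * ((G N K (a + 1, max (b - 1) 1) + G N K (max (a - 1) 1, b + 1)) / 2) := by
            ring
    · -- absorbed
      have hz : ∀ k, G N k (a, b) = 0 := fun k => G_absorbed N k (a, b) (by show N+1 ≤ a+b; omega)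
      rw [Ff_absorbed N a b (by omega), hz]
      rw [Finset.sum_congr rfl (fun k _ => hz k), Finset.sum_const_zero]
      simp

lemma G_hasSum (N : ℕ) (hN : 3 ≤ N) : HasSum (fun k => G N k (1, 1)) (Ff N (1, 1)) := by
  rw [hasSum_iff_tendsto_nat_of_nonneg (fun k => G_nonneg N k (1, 1))]
  have hNpos : 0 < N := by omega
  have hr0 : (0:ℝ) ≤ 1 - (1/2)^N := by
    have : ((1:ℝ)/2)^N ≤ 1 := pow_le_one₀ (by norm_num) (by norm_num)
    linarith
  have hr1 : (1:ℝ) - (1/2)^N < 1 := by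
    have : (0:ℝ) < (1/2)^N := by positivity
    linarith
  have hdiv : Filter.Tendsto (fun K : ℕ => K / N) Filter.atTop Filter.atTop := by
    apply Filter.tendsto_atTop_atTop.mpr
    intro b
    exact ⟨b * N, fun K hK => (Nat.le_div_iff_mul_le hNpos).mpr hK⟩
  have hgeo : Filter.Tendsto (fun K : ℕ => 2 * (N:ℝ)^2 * (1 - (1/2)^N)^(K / N))
      Filter.atTop (nhds 0) := by
    have := ((tendsto_pow_atTop_nhds_zero_of_lt_one hr0 hr1).comp hdiv).const_mul (2 * (N:ℝ)^2)
    simpa using this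
  have hzero : Filter.Tendsto
      (fun K => (∑ k ∈ Finset.range K, G N k (1, 1)) - Ff N (1, 1)) Filter.atTop (nhds 0) := by
    apply squeeze_zero_norm _ hgeo
    intro K
    rw [Real.norm_eq_abs, abs_sub_comm]
    calc |Ff N (1,1) - ∑ k ∈ Finset.range K, G N k (1, 1)| ≤ 2 * (N : ℝ)^2 * G N K (1, 1) :=
          err_bound N hN K 1 1 le_rfl le_rfl (by omega)
      _ ≤ 2 * (N:ℝ)^2 * (1 - (1/2)^N)^(K / N) := by
          have h2 := G_bound N K (1,1) le_rfl le_rfl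
          have h3 : (0:ℝ) ≤ 2 * (N:ℝ)^2 := by positivity
          exact mul_le_mul_of_nonneg_left h2 h3
  have := hzero.add_const (Ff N (1, 1))
  simpa using this


variable {V : Type*} [Fintype V] [DecidableEq V]

noncomputable def gFun (P : V → V → ℝ) : ℕ → V → Finset V → ℝ
  | 0, _, A => if A = Finset.univ then 0 else 1
  | (k+1), x, A => ∑ y, P x y * gFun P k y (insert y A)

lemma gFun_zero (P : V → V → ℝ) (x : V) (A : Finset V) :
    gFun P 0 x A = if A = Finset.univ then 0 else 1 := rfl

lemma gFun_succ (P : V → V → ℝ) (k : ℕ) (x : V) (A : Finset V) :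
    gFun P (k+1) x A = ∑ y, P x y * gFun P k y (insert y A) := rfl

lemma gFun_univ (P : V → V → ℝ) : ∀ (k : ℕ) (x : V), gFun P k x Finset.univ = 0 := by
  intro k
  induction k with
  | zero => intro x; simp [gFun_zero]
  | succ k ih => intro x; simp [gFun_succ, ih]

lemma image_cons (k : ℕ) (y : V) (w' : Fin (k+1) → V) :
    Finset.image (Fin.cons y w' : Fin (k+2) → V) Finset.univ
      = insert y (Finset.image w' Finset.univ) := by
  ext z
  simp only [Finset.mem_image, Finset.mem_univ, true_and, Finset.mem_insert]
  constructor
  · rintro ⟨i, rfl⟩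
    rcases Fin.eq_zero_or_eq_succ i with rfl | ⟨j, rfl⟩
    · left; simp
    · right; exact ⟨j, by simp⟩
  · rintro (rfl | ⟨j, rfl⟩)
    · exact ⟨0, by simp⟩
    · exact ⟨j.succ, by simp⟩

lemma prod_cons (P : V → V → ℝ) (k : ℕ) (y : V) (w' : Fin (k+1) → V) :
    (∏ t : Fin (k+1), P ((Fin.cons y w' : Fin (k+2) → V) t.castSucc)
        ((Fin.cons y w' : Fin (k+2) → V) t.succ))
      = P y (w' 0) * ∏ t : Fin k, P (w' t.castSucc) (w' t.succ) := by
  rw [Fin.prod_univ_succ]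
  refine congrArg₂ (· * ·) (by simp) ?_
  apply Finset.prod_congr rfl
  intro t _
  rw [← Fin.succ_castSucc]
  simp [Fin.cons_succ]

set_option maxHeartbeats 1000000 in
lemma sum_walks (P : V → V → ℝ) : ∀ (k : ℕ) (x : V) (A : Finset V),
    (∑ w : Fin (k+1) → V,
      if A ∪ Finset.image w Finset.univ = Finset.univ then 0 else prefixProb P x w)
      = gFun P k x (insert x A) := by
  intro k
  induction k with
  | zero =>
    intro x A
    rw [← Equiv.sum_comp (Equiv.funUnique (Fin 1) V).symm]
    have e2 : ∀ y : V,
        (if A ∪ Finset.image ((Equiv.funUnique (Fin 1) V).symm y) Finset.univ = Finset.univ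
            then (0:ℝ) else prefixProb P x ((Equiv.funUnique (Fin 1) V).symm y))
        = if y = x then (if insert y A = Finset.univ then 0 else 1) else 0 := by
      intro y
      have e1 : ((Equiv.funUnique (Fin 1) V).symm y : Fin 1 → V) = fun _ => y := rfl
      rw [e1]
      have him : Finset.image (fun _ : Fin 1 => y) Finset.univ = {y} :=
        Finset.image_const Finset.univ_nonempty y
      have hA : A ∪ {y} = insert y A := by
        rw [Finset.union_comm, ← Finset.insert_eq]
      rw [him, hA]
      simp only [prefixProb]
      rw [Fin.prod_univ_zero, mul_one]
      split_ifs <;> simp_all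
    rw [Finset.sum_congr rfl (fun y _ => e2 y),
      Finset.sum_ite_eq' Finset.univ x (fun y => if insert y A = Finset.univ then (0:ℝ) else 1)]
    simp [gFun_zero]
  | succ k ih =>
    intro x A
    have e2 : ∀ (y : V) (w' : Fin (k+1) → V),
        (if A ∪ Finset.image ((Fin.consEquiv (fun _ : Fin (k+2) => V)) (y, w')) Finset.univ
            = Finset.univ then (0:ℝ)
          else prefixProb P x ((Fin.consEquiv (fun _ : Fin (k+2) => V)) (y, w')))
        = if y = x then
            (if insert y A ∪ Finset.image w' Finset.univ = Finset.univ then (0:ℝ)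
              else P y (w' 0) * ∏ t : Fin k, P (w' t.castSucc) (w' t.succ))
          else 0 := by
      intro y w'
      have hc : ((Fin.consEquiv (fun _ : Fin (k+2) => V)) (y, w') : Fin (k+2) → V)
          = Fin.cons y w' := rfl
      rw [hc]
      have hset : A ∪ Finset.image (Fin.cons y w' : Fin (k+2) → V) Finset.univ
          = insert y A ∪ Finset.image w' Finset.univ := by
        rw [image_cons, Finset.union_insert, Finset.insert_union]
      rw [hset]
      simp only [prefixProb, Fin.cons_zero, prod_cons]
      split_ifs <;> ring
    rw [← Equiv.sum_comp (Fin.consEquiv (fun _ : Fin (k+2) => V)), Fintype.sum_prod_type]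
    rw [Finset.sum_congr rfl (fun y (_ : y ∈ Finset.univ) =>
      Finset.sum_congr rfl (fun w' (_ : w' ∈ Finset.univ) => e2 y w'))]
    have e3 : ∀ y : V,
        (∑ w' : Fin (k+1) → V, if y = x then
            (if insert y A ∪ Finset.image w' Finset.univ = Finset.univ then (0:ℝ)
              else P y (w' 0) * ∏ t : Fin k, P (w' t.castSucc) (w' t.succ))
          else 0)
        = if y = x then
            (∑ w' : Fin (k+1) → V,
              (if insert y A ∪ Finset.image w' Finset.univ = Finset.univ then (0:ℝ)
                else P y (w' 0) * ∏ t : Fin k, P (w' t.castSucc) (w' t.succ)))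
          else 0 := by
      intro y
      split_ifs <;> simp
    rw [Finset.sum_congr rfl (fun y (_ : y ∈ Finset.univ) => e3 y),
      Finset.sum_ite_eq' Finset.univ x]
    simp only [Finset.mem_univ, if_true]
    have e4 : ∀ w' : Fin (k+1) → V,
        (if insert x A ∪ Finset.image w' Finset.univ = Finset.univ then (0:ℝ)
          else P x (w' 0) * ∏ t : Fin k, P (w' t.castSucc) (w' t.succ))
        = ∑ z : V, P x z *
            (if insert x A ∪ Finset.image w' Finset.univ = Finset.univ then (0:ℝ)
              else prefixProb P z w') := by
      intro w'
      by_cases hC : insert x A ∪ Finset.image w' Finset.univ = Finset.univ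
      · simp [hC]
      · simp only [hC, if_false]
        have e5 : ∀ z : V, P x z * prefixProb P z w'
            = (if w' 0 = z then P x z else 0) * ∏ t : Fin k, P (w' t.castSucc) (w' t.succ) := by
          intro z
          simp only [prefixProb]
          split_ifs <;> ring
        rw [Finset.sum_congr rfl (fun z (_ : z ∈ Finset.univ) => e5 z), ← Finset.sum_mul,
          Finset.sum_ite_eq Finset.univ (w' 0) (fun z => P x z)]
        simp
    rw [Finset.sum_congr rfl (fun w' (_ : w' ∈ Finset.univ) => e4 w'), Finset.sum_comm]
    rw [Finset.sum_congr rfl (fun z (_ : z ∈ Finset.univ) =>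
      (Finset.mul_sum Finset.univ (fun w' : Fin (k+1) → V =>
        (if insert x A ∪ Finset.image w' Finset.univ = Finset.univ then (0:ℝ)
          else prefixProb P z w')) (P x z)).symm)]
    rw [Finset.sum_congr rfl (fun z (_ : z ∈ Finset.univ) => by rw [ih z (insert x A)])]
    exact (gFun_succ P k x (insert x A)).symm

set_option maxHeartbeats 1000000 in
lemma cover_eq_gFun (P : V → V → ℝ) (s : V) (k : ℕ) :
    coverSurvival P s k = gFun P k s {s} := by
  have h1 : coverSurvival P s k
      = ∑ w : Fin (k+1) → V,
          (if (∅ : Finset V) ∪ Finset.image w Finset.univ = Finset.univ then 0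
            else prefixProb P s w) := by
    simp only [coverSurvival]
    apply Finset.sum_congr rfl
    intro w _
    have hiff : Function.Surjective w ↔
        (∅ : Finset V) ∪ Finset.image w Finset.univ = Finset.univ := by
      rw [Finset.empty_union]
      constructor
      · intro h
        rw [Finset.eq_univ_iff_forall]
        intro z
        obtain ⟨i, hi⟩ := h z
        exact Finset.mem_image.mpr ⟨i, Finset.mem_univ i, hi⟩
      · intro h z
        have := Finset.eq_univ_iff_forall.mp h z
        obtain ⟨i, _, hi⟩ := Finset.mem_image.mp this
        exact ⟨i, hi⟩
    by_cases hs : Function.Surjective w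
    · rw [if_pos hs, if_pos (hiff.mp hs)]
    · rw [if_neg hs, if_neg (fun hc => hs (hiff.mpr hc))]
  rw [h1, sum_walks P k s ∅]
  norm_num


def arcL (n : ℕ) (l : ZMod (n+1)) (len : ℕ) : Finset (ZMod (n+1)) :=
  (Finset.range len).image (fun (j : ℕ) => l + ((j : ℕ) : ZMod (n+1)))

def arcS (n : ℕ) (x : ZMod (n+1)) (a b : ℕ) : Finset (ZMod (n+1)) :=
  arcL n (x - ((a - 1 : ℕ) : ZMod (n+1))) (a + b - 1)

lemma arcL_univ (n : ℕ) (l : ZMod (n+1)) : arcL n l (n+1) = Finset.univ := by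
  apply Finset.eq_univ_of_card
  rw [ZMod.card]
  rw [arcL, Finset.card_image_of_injOn, Finset.card_range]
  intro j hj j' hj' he
  simp only [Finset.coe_range, Set.mem_Iio] at hj hj'
  have : (j : ZMod (n+1)) = (j' : ZMod (n+1)) := by
    have := add_left_cancel he
    exact this
  calc j = ((j : ZMod (n+1))).val := (ZMod.val_cast_of_lt hj).symm
    _ = ((j' : ZMod (n+1))).val := by rw [this]
    _ = j' := ZMod.val_cast_of_lt hj'

lemma arcS_univ (n : ℕ) (x : ZMod (n+1)) (a b : ℕ) (hab : a + b = n + 2) :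
    arcS n x a b = Finset.univ := by
  rw [arcS, show a + b - 1 = n + 1 by omega, arcL_univ]

lemma arcS_ne_univ (n : ℕ) (x : ZMod (n+1)) (a b : ℕ) (hab : a + b ≤ n + 1) :
    arcS n x a b ≠ Finset.univ := by
  intro h
  have h1 : (arcS n x a b).card ≤ a + b - 1 := by
    calc (arcS n x a b).card ≤ (Finset.range (a+b-1)).card := Finset.card_image_le
      _ = a + b - 1 := Finset.card_range _
  rw [h, Finset.card_univ, ZMod.card] at h1
  omega

lemma arcS_one_one (n : ℕ) (x : ZMod (n+1)) : arcS n x 1 1 = {x} := by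
  rw [arcS, arcL]
  norm_num

lemma arcL_succ_right (n : ℕ) (l : ZMod (n+1)) (len : ℕ) :
    arcL n l (len + 1) = insert (l + (len : ZMod (n+1))) (arcL n l len) := by
  rw [arcL, Finset.range_add_one, Finset.image_insert, arcL]

lemma arcL_succ_left (n : ℕ) (l : ZMod (n+1)) (len : ℕ) :
    arcL n (l - 1) (len + 1) = insert (l - 1) (arcL n l len) := by
  ext z
  simp only [arcL, Finset.mem_image, Finset.mem_range, Finset.mem_insert]
  constructor
  · rintro ⟨j, hj, rfl⟩
    cases j with
    | zero => left; norm_num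
    | succ i =>
      right
      refine ⟨i, by omega, ?_⟩
      push_cast
      ring
  · rintro (rfl | ⟨i, hi, rfl⟩)
    · exact ⟨0, by omega, by norm_num⟩
    · refine ⟨i + 1, by omega, ?_⟩
      push_cast
      ring

lemma insert_right (n : ℕ) (x : ZMod (n+1)) (a b : ℕ) (ha : 1 ≤ a) (hb : 1 ≤ b) :
    insert (x+1) (arcS n x a b) = arcS n (x+1) (a+1) (max (b-1) 1) := by
  have hcast : (((a - 1 : ℕ)) : ZMod (n+1)) = (a : ZMod (n+1)) - 1 := by
    push_cast [Nat.cast_sub ha]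
    ring
  rcases Nat.lt_or_ge b 2 with hb1 | hb2
  · have hb' : b = 1 := by omega
    subst hb'
    have hmax : max (1 - 1) 1 = 1 := rfl
    rw [hmax, arcS, arcS, show a + 1 - 1 = a by omega, show a + 1 + 1 - 1 = a + 1 by omega]
    have hl : (x + 1) - ((a : ℕ) : ZMod (n+1)) = x - ((a - 1 : ℕ) : ZMod (n+1)) := by
      rw [hcast]; ring
    rw [hl, arcL_succ_right]
    congr 1
    rw [hcast]
    ring
  · have hmax : max (b - 1) 1 = b - 1 := by omega
    rw [hmax]
    have hmem : x + 1 ∈ arcS n x a b := by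
      rw [arcS, arcL]
      apply Finset.mem_image.mpr
      refine ⟨a, by simp only [Finset.mem_range]; omega, ?_⟩
      rw [hcast]
      ring
    rw [Finset.insert_eq_self.mpr hmem, arcS, arcS]
    congr 1
    · rw [hcast, show (((a + 1 - 1 : ℕ)) : ZMod (n+1)) = (a : ZMod (n+1)) by norm_num]
      ring
    · omega

lemma insert_left (n : ℕ) (x : ZMod (n+1)) (a b : ℕ) (ha : 1 ≤ a) (hb : 1 ≤ b) :
    insert (x-1) (arcS n x a b) = arcS n (x-1) (max (a-1) 1) (b+1) := by
  rcases Nat.lt_or_ge a 2 with ha1 | ha2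
  · have ha' : a = 1 := by omega
    subst ha'
    have hmax : max (1 - 1) 1 = 1 := rfl
    rw [hmax, arcS, arcS]
    norm_num
    exact (arcL_succ_left n x b).symm
  · have hmax : max (a - 1) 1 = a - 1 := by omega
    rw [hmax]
    have hcast : (((a - 1 : ℕ)) : ZMod (n+1)) = (a : ZMod (n+1)) - 1 := by
      push_cast [Nat.cast_sub ha]
      ring
    have hcast2 : (((a - 2 : ℕ)) : ZMod (n+1)) = (a : ZMod (n+1)) - 2 := by
      push_cast [Nat.cast_sub (by omega : 2 ≤ a)]
      ring
    have hmem : x - 1 ∈ arcS n x a b := by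
      rw [arcS, arcL]
      apply Finset.mem_image.mpr
      refine ⟨a - 2, by simp only [Finset.mem_range]; omega, ?_⟩
      rw [hcast, hcast2]
      ring
    rw [Finset.insert_eq_self.mpr hmem, arcS, arcS]
    congr 1
    · rw [hcast, show (((a - 1 - 1 : ℕ)) : ZMod (n+1)) = (a : ZMod (n+1)) - 2 by
        rw [show a - 1 - 1 = a - 2 by omega, hcast2]]
      ring
    · omega

lemma cycle_sum (n : ℕ) (hn : 2 ≤ n) (x : ZMod (n+1)) (F : ZMod (n+1) → ℝ) :
    ∑ y, cycleRW n x y * F y = (F (x+1) + F (x-1)) / 2 := by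
  have hne : x + 1 ≠ x - 1 := by
    intro h
    have h2 : ((2 : ℕ) : ZMod (n+1)) = 0 := by
      have : (1 : ZMod (n+1)) = -1 := by linear_combination h
      push_cast
      linear_combination this
    rw [ZMod.natCast_eq_zero_iff] at h2
    have := Nat.le_of_dvd (by norm_num) h2
    omega
  have e : ∀ y : ZMod (n+1), cycleRW n x y * F y
      = if y ∈ ({x + 1, x - 1} : Finset (ZMod (n+1))) then (1/2) * F y else 0 := by
    intro y
    rw [cycleRW]
    have : (y ∈ ({x + 1, x - 1} : Finset (ZMod (n+1)))) ↔ (y = x + 1 ∨ y = x - 1) := by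
      simp [Finset.mem_insert, Finset.mem_singleton]
    split_ifs with h1 h2 h2
    · ring
    · exact absurd (this.mpr h1) h2
    · exact absurd (this.mp h2) h1
    · ring
  rw [Finset.sum_congr rfl (fun y _ => e y), Finset.sum_ite_mem, Finset.univ_inter,
    Finset.sum_pair hne]
  ring



lemma g_eq_G (n : ℕ) (hn : 2 ≤ n) : ∀ (k : ℕ) (x : ZMod (n+1)) (a b : ℕ),
    1 ≤ a → 1 ≤ b → a + b ≤ n + 2 →
    gFun (cycleRW n) k x (arcS n x a b) = G (n+1) k (a, b) := by
  intro k
  induction k with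
  | zero =>
    intro x a b ha hb hab
    rw [gFun_zero, G_zero]
    rcases Nat.lt_or_ge (a+b) (n+2) with h | h
    · rw [if_neg (arcS_ne_univ n x a b (by omega)), if_neg (by show ¬ (n+1)+1 ≤ a+b; omega)]
    · rw [if_pos (arcS_univ n x a b (by omega)), if_pos (by show (n+1)+1 ≤ a+b; omega)]
  | succ k ih =>
    intro x a b ha hb hab
    rcases Nat.lt_or_ge (a+b) (n+2) with h | h
    · rw [gFun_succ]
      refine (cycle_sum n hn x
        (fun y => gFun (cycleRW n) k y (insert y (arcS n x a b)))).trans ?_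
      show (gFun (cycleRW n) k (x+1) (insert (x+1) (arcS n x a b))
          + gFun (cycleRW n) k (x-1) (insert (x-1) (arcS n x a b))) / 2 = _
      rw [insert_right n x a b ha hb, insert_left n x a b ha hb]
      rw [ih (x+1) (a+1) (max (b-1) 1) (by omega) (le_max_right _ 1) (by omega)]
      rw [ih (x-1) (max (a-1) 1) (b+1) (le_max_right _ 1) (by omega) (by omega)]
      rw [G_succ, if_neg (by show ¬ (n+1)+1 ≤ a+b; omega)]
      rfl
    · have hu : arcS n x a b = Finset.univ := arcS_univ n x a b (by omega)
      rw [hu, gFun_univ, G_absorbed (n+1) (k+1) (a,b) (by show (n+1)+1 ≤ a+b; omega)]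

end CycleCover

/-- the expected cover time of the simple random walk on the cycle with
`n + 1` nodes (`n ≥ 2`), started at any node, equals `n(n+1)/2`. -/
theorem cycle_rw_cover (n : ℕ) (hn : 2 ≤ n) (s : ZMod (n + 1)) :
    expCoverTime (cycleRW n) s = (n : ℝ) * (n + 1) / 2 := by
  have h2 : ∀ k, coverSurvival (cycleRW n) s k = CycleCover.G (n+1) k (1,1) := by
    intro k
    rw [CycleCover.cover_eq_gFun (cycleRW n) s k, ← CycleCover.arcS_one_one n s,
      CycleCover.g_eq_G n hn k s 1 1 le_rfl le_rfl (by omega)]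
  rw [expCoverTime, tsum_congr h2, (CycleCover.G_hasSum (n+1) (by omega)).tsum_eq,
    CycleCover.Ff_val (n+1) 1 1 (by omega)]
  push_cast
  ring
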